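/- arXiv:2406.04102 — 2 statements merged into one kernel-verified Lean document; each statement's English description precedes it below -/
import Mathlib

section
/- For every ε > 0 there exists a finite set A ⊆ ℝ² with at least 4 points such that for every partition A = B ⊔ C into two nonempty parts, MST(B) + MST(C) ≤ (1 + ε) · MST(A). (The infimum over all finite sets of the maximum MST-ratio over bipartitions is 1.) -/
open scoped Classical

noncomputable section

/-- Points of the Euclidean plane. -/
abbrev Pt := EuclideanSpace ℝ (Fin 2)

/-- The total Euclidean edge length of a graph on the points of `S`. -/
noncomputable def treeCost (S : Finset Pt) (T : SimpleGraph S) : ℝ :=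
  ∑ e ∈ Finset.univ.filter (· ∈ T.edgeSet),
    Sym2.lift ⟨fun (a b : S) => dist (a : Pt) (b : Pt), fun a b => dist_comm (a : Pt) (b : Pt)⟩ e

/-- The length of a Euclidean minimum spanning tree of the finite point set `S`:
the infimum over all spanning trees (connected acyclic graphs on the points of `S`)
of the total Euclidean edge length.  (By convention this is `0` for sets with at
most one point, since `sInf ∅ = 0`.) -/
noncomputable def mst (S : Finset Pt) : ℝ :=
  sInf { L : ℝ | ∃ T : SimpleGraph S, T.Connected ∧ T.IsAcyclic ∧ L = treeCost S T }

/-! ### Auxiliary machinery -/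

/-- The edge-length function. -/
noncomputable def fS (S : Finset Pt) : Sym2 S → ℝ :=
  Sym2.lift ⟨fun (a b : S) => dist (a : Pt) (b : Pt), fun a b => dist_comm (a : Pt) (b : Pt)⟩

lemma fS_nonneg (S : Finset Pt) (e : Sym2 S) : 0 ≤ fS S e := by
  induction e using Sym2.ind with
  | _ a b => simpa [fS] using dist_nonneg

lemma treeCost_eq (S : Finset Pt) (T : SimpleGraph S) :
    treeCost S T = ∑ e ∈ Finset.univ.filter (· ∈ T.edgeSet), fS S e := rfl

lemma treeCost_nonneg (S : Finset Pt) (T : SimpleGraph S) : 0 ≤ treeCost S T := by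
  rw [treeCost_eq]
  exact Finset.sum_nonneg fun e _ => fS_nonneg S e

/-- The star graph centered at `r0`. -/
def starG (S : Finset Pt) (r0 : S) : SimpleGraph S where
  Adj a b := a ≠ b ∧ (a = r0 ∨ b = r0)
  symm := ⟨fun a b h => ⟨h.1.symm, h.2.symm⟩⟩
  loopless := ⟨fun a h => h.1 rfl⟩

lemma starG_connected (S : Finset Pt) (r0 : S) : (starG S r0).Connected := by
  rw [SimpleGraph.connected_iff]
  have key : ∀ a : S, (starG S r0).Reachable a r0 := by
    intro a
    rcases eq_or_ne a r0 with rfl | h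
    · exact SimpleGraph.Reachable.refl _
    · exact SimpleGraph.Adj.reachable ⟨h, Or.inr rfl⟩
  exact ⟨fun a b => (key a).trans (key b).symm, ⟨r0⟩⟩

lemma starG_acyclic (S : Finset Pt) (r0 : S) : (starG S r0).IsAcyclic := by
  intro v c hc
  have h3 := hc.three_le_length
  cases c with
  | nil => simp at h3
  | @cons _ a _ h₁ q =>
    cases q with
    | nil => simp at h3
    | @cons _ b _ h₂ rest =>
      have hsup : (a :: rest.support).Nodup := by
        have h := hc.support_nodup
        simpa [SimpleGraph.Walk.support_cons, List.tail_cons] using h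
      have hna : a ∉ rest.support := (List.nodup_cons.mp hsup).1
      have hrest : rest.support.Nodup := (List.nodup_cons.mp hsup).2
      obtain ⟨hva, hv1⟩ := h₁
      obtain ⟨hab, hv2⟩ := h₂
      cases rest with
      | nil => change 3 ≤ 2 at h3; omega
      | @cons _ x _ h₃ rest' =>
        obtain ⟨hbx, hv3⟩ := h₃
        rcases hv2 with ha | hb
        · rcases hv3 with hbr | hxr
          · exact hab (ha.trans hbr.symm)
          · apply hna
            have hax : a = x := ha.trans hxr.symm
            rw [hax]
            exact List.mem_cons_of_mem _ rest'.start_mem_support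
        · rcases hv1 with hvr | har
          · have hb_notin : b ∉ rest'.support := by
              replace hrest : (b :: rest'.support).Nodup := hrest
              exact (List.nodup_cons.mp hrest).1
            apply hb_notin
            have hbv : b = v := hb.trans hvr.symm
            rw [hbv]
            exact rest'.end_mem_support
          · exact hab (har.trans hb.symm)

lemma starG_edge (S : Finset Pt) (r0 : S) :
    Finset.univ.filter (· ∈ (starG S r0).edgeSet)
      = (Finset.univ.erase r0).image (fun v => s(r0, v)) := by
  ext e
  induction e using Sym2.ind with
  | _ a b =>
    simp only [Finset.mem_filter, Finset.mem_univ, true_and, and_true, Finset.mem_image,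
      Finset.mem_erase, SimpleGraph.mem_edgeSet]
    constructor
    · rintro ⟨hab, h | h⟩
      · subst h
        exact ⟨b, Ne.symm hab, rfl⟩
      · subst h
        exact ⟨a, hab, Sym2.eq_swap⟩
    · rintro ⟨w, hw, hweq⟩
      rcases Sym2.eq_iff.mp hweq with ⟨h1, h2⟩ | ⟨h1, h2⟩
      · subst h1; subst h2
        exact ⟨fun h => hw h.symm, Or.inl rfl⟩
      · subst h1; subst h2
        exact ⟨hw, Or.inr rfl⟩

lemma treeCost_starG (S : Finset Pt) (r : Pt) (hr : r ∈ S) :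
    treeCost S (starG S ⟨r, hr⟩) = ∑ v ∈ S, dist r v := by
  rw [treeCost_eq, starG_edge]
  rw [Finset.sum_image (fun x _ y _ h => Sym2.congr_right.mp h)]
  have h1 : ∀ v : S, fS S s((⟨r, hr⟩ : S), v) = dist r (v : Pt) := fun v => rfl
  simp only [h1]
  rw [Finset.sum_erase _ (by simp)]
  exact Finset.sum_coe_sort S (fun v => dist r v)

/-- Star upper bound on the MST. -/
lemma mst_le_star (S : Finset Pt) (r : Pt) (hr : r ∈ S) :
    mst S ≤ ∑ v ∈ S, dist r v := by
  apply csInf_le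
  · refine ⟨0, ?_⟩
    rintro L ⟨T, -, -, rfl⟩
    exact treeCost_nonneg S T
  · exact ⟨starG S ⟨r, hr⟩, starG_connected S _, starG_acyclic S _,
      (treeCost_starG S r hr).symm⟩

lemma walk_dist_le (S : Finset Pt) (T : SimpleGraph S) {a b : S} (w : T.Walk a b) :
    dist (a : Pt) (b : Pt) ≤ (w.edges.map (fS S)).sum := by
  induction w with
  | nil => simp
  | cons h p ih =>
    rw [SimpleGraph.Walk.edges_cons, List.map_cons, List.sum_cons]
    refine (dist_triangle _ _ _).trans (add_le_add ?_ ih)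
    simp [fS]

/-- Lower bound on the MST: distance between any two of its points. -/
lemma dist_le_mst (S : Finset Pt) (p q : Pt) (hp : p ∈ S) (hq : q ∈ S) :
    dist p q ≤ mst S := by
  apply le_csInf
  · exact ⟨treeCost S (starG S ⟨p, hp⟩), starG S ⟨p, hp⟩, starG_connected S _,
      starG_acyclic S _, rfl⟩
  · rintro L ⟨T, hconn, -, rfl⟩
    obtain ⟨w⟩ := hconn.preconnected ⟨p, hp⟩ ⟨q, hq⟩
    set w' : T.Walk ⟨p, hp⟩ ⟨q, hq⟩ := (w.toPath : T.Path _ _).1 with hw'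
    have hnd : w'.edges.Nodup := (w.toPath.2).edges_nodup
    calc dist p q ≤ (w'.edges.map (fS S)).sum := walk_dist_le S T w'
      _ = ∑ e ∈ w'.edges.toFinset, fS S e := (List.sum_toFinset _ hnd).symm
      _ ≤ ∑ e ∈ Finset.univ.filter (· ∈ T.edgeSet), fS S e := by
          apply Finset.sum_le_sum_of_subset_of_nonneg
          · intro e he
            simp only [Finset.mem_filter, Finset.mem_univ, true_and]
            exact w'.edges_subset_edgeSet (List.mem_toFinset.mp he)
          · exact fun e _ _ => fS_nonneg S e
      _ = treeCost S T := rfl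

/-! ### The concrete configuration -/

/-- A point on the `x`-axis. -/
noncomputable def pt (t : ℝ) : Pt := !₂[t, 0]

lemma dist_pt (a b : ℝ) : dist (pt a) (pt b) = |a - b| := by
  rw [EuclideanSpace.dist_eq, Fin.sum_univ_two]
  simp [pt, Real.dist_eq, Real.sqrt_sq_eq_abs]

lemma pt_inj {a b : ℝ} (h : pt a = pt b) : a = b := by
  have h0 : |a - b| = 0 := by rw [← dist_pt, h, dist_self]
  have := abs_eq_zero.mp h0
  linarith

lemma pt_ne {a b : ℝ} (h : a ≠ b) : pt a ≠ pt b := fun h' => h (pt_inj h')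

/-- The four-point configuration: one far point and a tight cluster. -/
noncomputable def Aset (δ : ℝ) : Finset Pt :=
  {pt 0, pt 1, pt (1 + δ), pt (1 + 2*δ)}

lemma memA {δ : ℝ} {v : Pt} (hv : v ∈ Aset δ) (h0 : v ≠ pt 0) :
    v = pt 1 ∨ v = pt (1 + δ) ∨ v = pt (1 + 2*δ) := by
  simp only [Aset, Finset.mem_insert, Finset.mem_singleton] at hv
  tauto

lemma dist_cc {δ : ℝ} (hδ : 0 ≤ δ) {u w : Pt}
    (hu : u = pt 1 ∨ u = pt (1 + δ) ∨ u = pt (1 + 2*δ))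
    (hw : w = pt 1 ∨ w = pt (1 + δ) ∨ w = pt (1 + 2*δ)) :
    dist u w ≤ 2*δ := by
  rcases hu with rfl | rfl | rfl <;> rcases hw with rfl | rfl | rfl <;>
    (rw [dist_pt, abs_sub_le_iff]; exact ⟨by linarith, by linarith⟩)

lemma dist_c0 {δ : ℝ} (hδ : 0 ≤ δ) {u : Pt}
    (hu : u = pt 1 ∨ u = pt (1 + δ) ∨ u = pt (1 + 2*δ)) :
    dist u (pt 0) ≤ 1 + 2*δ := by
  rcases hu with rfl | rfl | rfl <;>
    (rw [dist_pt, abs_sub_le_iff]; exact ⟨by linarith, by linarith⟩)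

/-- The per-point budget. -/
noncomputable def ub (δ : ℝ) : Pt → ℝ := fun v => if v = pt 0 then 1 + 2*δ else 2*δ

lemma ub_nonneg {δ : ℝ} (hδ : 0 ≤ δ) (v : Pt) : 0 ≤ ub δ v := by
  unfold ub; split <;> linarith

lemma sum_ub {δ : ℝ} (hδ : 0 < δ) : ∑ v ∈ Aset δ, ub δ v = 1 + 8*δ := by
  have h01 : pt (0:ℝ) ≠ pt 1 := pt_ne (by norm_num)
  have h02 : pt (0:ℝ) ≠ pt (1 + δ) := pt_ne (by linarith)
  have h03 : pt (0:ℝ) ≠ pt (1 + 2*δ) := pt_ne (by linarith)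
  have h12 : pt (1:ℝ) ≠ pt (1 + δ) := pt_ne (by linarith)
  have h13 : pt (1:ℝ) ≠ pt (1 + 2*δ) := pt_ne (by linarith)
  have h23 : pt (1 + δ) ≠ pt (1 + 2*δ) := pt_ne (by intro h; linarith)
  rw [Aset]
  rw [Finset.sum_insert (by simp [h01, h02, h03]),
      Finset.sum_insert (by simp [h12, h13]),
      Finset.sum_insert (by simp [h23]),
      Finset.sum_singleton]
  simp only [ub]
  rw [if_pos trivial, if_neg h01.symm, if_neg h02.symm, if_neg h03.symm]
  ring

/-- One part of a nonempty subset bound: if `r ∈ B` and each summand is bounded,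
then `mst B` is at most the budget of `B`. -/
lemma mst_le_sum_ub {δ : ℝ} (hδ : 0 ≤ δ) (B : Finset Pt) (r : Pt) (hr : r ∈ B)
    (hbd : ∀ v ∈ B, dist r v ≤ ub δ v) :
    mst B ≤ ∑ v ∈ B, ub δ v :=
  (mst_le_star B r hr).trans (Finset.sum_le_sum hbd)

/-- Key bipartition bound (assuming `pt 0 ∈ B`). -/
lemma key_bound {δ : ℝ} (hδ : 0 < δ) (B C : Finset Pt)
    (hC : C.Nonempty) (hdisj : Disjoint B C)
    (hun : B ∪ C = Aset δ) (h0B : pt 0 ∈ B) :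
    mst B + mst C ≤ 1 + 8*δ := by
  have hBA : B ⊆ Aset δ := hun ▸ Finset.subset_union_left
  have hCA : C ⊆ Aset δ := hun ▸ Finset.subset_union_right
  have hC0 : ∀ v ∈ C, v ≠ pt 0 := by
    intro v hv h
    exact (Finset.disjoint_left.mp hdisj) h0B (h ▸ hv)
  -- C is contained in the cluster
  have hCclust : ∀ v ∈ C, v = pt 1 ∨ v = pt (1 + δ) ∨ v = pt (1 + 2*δ) :=
    fun v hv => memA (hCA hv) (hC0 v hv)
  have hCub : mst C ≤ ∑ v ∈ C, ub δ v := by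
    obtain ⟨rc, hrc⟩ := hC
    refine mst_le_sum_ub hδ.le C rc hrc ?_
    intro v hv
    have : dist rc v ≤ 2*δ := dist_cc hδ.le (hCclust rc hrc) (hCclust v hv)
    calc dist rc v ≤ 2*δ := this
      _ ≤ ub δ v := by simp only [ub]; rw [if_neg (hC0 v hv)]
  have hBub : mst B ≤ ∑ v ∈ B, ub δ v := by
    by_cases hB1 : ∀ v ∈ B, v = pt 0
    · -- B = {pt 0}: the star at pt 0 has cost 0
      refine (mst_le_star B (pt 0) h0B).trans ?_
      apply Finset.sum_le_sum
      intro v hv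
      rw [hB1 v hv, dist_self]
      exact ub_nonneg hδ.le _
    · push_neg at hB1
      obtain ⟨rb, hrb, hrb0⟩ := hB1
      have hrbclust := memA (hBA hrb) hrb0
      refine mst_le_sum_ub hδ.le B rb hrb ?_
      intro v hv
      by_cases hv0 : v = pt 0
      · subst hv0
        simp only [ub]; rw [if_pos trivial]
        exact dist_c0 hδ.le hrbclust
      · simp only [ub]; rw [if_neg hv0]
        exact dist_cc hδ.le hrbclust (memA (hBA hv) hv0)
  calc mst B + mst C ≤ (∑ v ∈ B, ub δ v) + ∑ v ∈ C, ub δ v := add_le_add hBub hCub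
    _ = ∑ v ∈ B ∪ C, ub δ v := (Finset.sum_union hdisj).symm
    _ = ∑ v ∈ Aset δ, ub δ v := by rw [hun]
    _ = 1 + 8*δ := sum_ub hδ

/-- For every `ε > 0` there is a finite set `A ⊆ ℝ²` with at least
4 points such that every bipartition `A = B ⊔ C` into nonempty parts satisfies
`MST(B) + MST(C) ≤ (1 + ε)·MST(A)`: the infimum over finite sets of the maximum
MST-ratio over bipartitions is 1. -/
theorem inf_max_mst_ratio_eq_one :
    ∀ ε : ℝ, 0 < ε → ∃ A : Finset Pt, 4 ≤ A.card ∧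
      ∀ B C : Finset Pt, B.Nonempty → C.Nonempty → Disjoint B C → B ∪ C = A →
        mst B + mst C ≤ (1 + ε) * mst A := by
  intro ε hε
  set δ : ℝ := min ε 1 / 12 with hδdef
  have hδ : 0 < δ := div_pos (lt_min hε one_pos) (by norm_num)
  have h8δ : 8*δ ≤ ε := by
    have h12 : 12 * δ = min ε 1 := by rw [hδdef]; ring
    have : min ε 1 ≤ ε := min_le_left _ _
    linarith
  have h01 : pt (0:ℝ) ≠ pt 1 := pt_ne (by norm_num)
  have h02 : pt (0:ℝ) ≠ pt (1 + δ) := pt_ne (by linarith)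
  have h03 : pt (0:ℝ) ≠ pt (1 + 2*δ) := pt_ne (by linarith)
  have h12 : pt (1:ℝ) ≠ pt (1 + δ) := pt_ne (by linarith)
  have h13 : pt (1:ℝ) ≠ pt (1 + 2*δ) := pt_ne (by linarith)
  have h23 : pt (1 + δ) ≠ pt (1 + 2*δ) := pt_ne (by intro h; linarith)
  refine ⟨Aset δ, ?_, ?_⟩
  · rw [Aset]
    rw [Finset.card_insert_of_notMem (by simp [h01, h02, h03]),
        Finset.card_insert_of_notMem (by simp [h12, h13]),
        Finset.card_insert_of_notMem (by simp [h23]),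
        Finset.card_singleton]
  · intro B C hB hC hdisj hun
    have h0A : pt 0 ∈ Aset δ := by simp [Aset]
    have h1A : pt 1 ∈ Aset δ := by simp [Aset]
    have hmstA : (1:ℝ) ≤ mst (Aset δ) := by
      have := dist_le_mst (Aset δ) (pt 0) (pt 1) h0A h1A
      rwa [dist_pt, show |(0:ℝ) - 1| = 1 by norm_num] at this
    have hkey : mst B + mst C ≤ 1 + 8*δ := by
      have h0mem : pt 0 ∈ B ∪ C := hun ▸ h0A
      rcases Finset.mem_union.mp h0mem with h0B | h0C
      · exact key_bound hδ B C hC hdisj hun h0B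
      · have := key_bound hδ C B hB hdisj.symm (by rw [Finset.union_comm]; exact hun) h0C
        linarith
    calc mst B + mst C ≤ 1 + 8*δ := hkey
      _ ≤ 1 + ε := by linarith
      _ = (1 + ε) * 1 := by ring
      _ ≤ (1 + ε) * mst (Aset δ) := by
          apply mul_le_mul_of_nonneg_left hmstA
          linarith
end
end

section
/- Let A ⊆ ℝ² be finite and r ≥ 0, and let A_r be the union of closed disks of radius r centered at points of A. Two points a, b ∈ A lie in the same connected component of A_r if and only if there is a sequence a = x_0, x_1, …, x_k = b of points of A with ‖x_i − x_{i+1}‖ ≤ 2r for all i. Consequently the number of connected components of A_r equals the number of connected components of the graph on A with edges of length at most 2r. -/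
open scoped Classical

noncomputable section

namespace UnionDisksAux

open Set Metric

variable (A : Finset Pt) (r : ℝ)

/-- One step of the chain relation. -/
def Step (x y : Pt) : Prop := x ∈ A ∧ y ∈ A ∧ dist x y ≤ 2 * r

/-- The chain relation. -/
def Chain : Pt → Pt → Prop := Relation.ReflTransGen (Step A r)

variable {A r}

lemma chain_of_fin {k : ℕ} (x : Fin (k + 1) → Pt) (hmem : ∀ i, x i ∈ A)
    (hd : ∀ i : Fin k, dist (x i.castSucc) (x i.succ) ≤ 2 * r) :
    Chain A r (x 0) (x (Fin.last k)) := by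
  have H : ∀ i : Fin (k + 1), Chain A r (x 0) (x i) := by
    intro i
    induction i using Fin.induction with
    | zero => exact Relation.ReflTransGen.refl
    | succ i ih =>
      exact ih.tail ⟨hmem _, hmem _, hd i⟩
  exact H (Fin.last k)

lemma fin_of_chain {a b : Pt} (ha : a ∈ A) (h : Chain A r a b) :
    ∃ (k : ℕ) (x : Fin (k + 1) → Pt), (∀ i, x i ∈ A) ∧
      x 0 = a ∧ x (Fin.last k) = b ∧
      ∀ i : Fin k, dist (x i.castSucc) (x i.succ) ≤ 2 * r := by
  induction h with
  | refl => exact ⟨0, fun _ => a, fun _ => ha, rfl, rfl, fun i => i.elim0⟩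
  | @tail c b hac hstep ih =>
    obtain ⟨k, x, hmem, h0, hlast, hd⟩ := ih
    refine ⟨k + 1, Fin.snoc x b, ?_, ?_, ?_, ?_⟩
    · intro i
      induction i using Fin.lastCases with
      | last => simpa using hstep.2.1
      | cast j => simpa using hmem j
    · have h00 : (0 : Fin (k + 2)) = Fin.castSucc 0 := rfl
      rw [h00, Fin.snoc_castSucc]; exact h0
    · simp
    · intro i
      induction i using Fin.lastCases with
      | last =>
        have h1 : (Fin.last (k + 1)).castSucc = Fin.castSucc (Fin.last (k + 1)) := rfl
        simp only [Fin.succ_last, Fin.snoc_last, Fin.snoc_castSucc]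
        rw [hlast]
        exact hstep.2.2
      | cast j =>
        have h2 : (j.castSucc).succ = Fin.castSucc j.succ := (Fin.succ_castSucc j).symm
        rw [h2]
        simp only [Fin.snoc_castSucc]
        exact hd j

variable (hr : 0 ≤ r) {Ar : Set Pt} (hAr : Ar = ⋃ a ∈ A, Metric.closedBall a r)

include hAr in
lemma ball_subset_Ar {a : Pt} (ha : a ∈ A) : Metric.closedBall a r ⊆ Ar := by
  rw [hAr]; intro x hx; exact Set.mem_biUnion ha hx

include hr hAr in
lemma mem_Ar {a : Pt} (ha : a ∈ A) : a ∈ Ar :=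
  ball_subset_Ar hAr ha (Metric.mem_closedBall_self hr)

include hr hAr in
lemma step_mem_component {a b : Pt} (h : Step A r a b) :
    b ∈ connectedComponentIn Ar a := by
  have hU : IsPreconnected (Metric.closedBall a r ∪ Metric.closedBall b r) := by
    refine IsPreconnected.union (midpoint ℝ a b) ?_ ?_
      (convex_closedBall a r).isPreconnected (convex_closedBall b r).isPreconnected
    · rw [Metric.mem_closedBall, dist_midpoint_left (𝕜 := ℝ)]
      have : (‖(2:ℝ)‖)⁻¹ * dist a b ≤ (2:ℝ)⁻¹ * (2 * r) := by
        rw [Real.norm_ofNat]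
        exact mul_le_mul_of_nonneg_left h.2.2 (by norm_num)
      linarith
    · rw [Metric.mem_closedBall, midpoint_comm, dist_midpoint_left (𝕜 := ℝ), dist_comm]
      have : (‖(2:ℝ)‖)⁻¹ * dist a b ≤ (2:ℝ)⁻¹ * (2 * r) := by
        rw [Real.norm_ofNat]
        exact mul_le_mul_of_nonneg_left h.2.2 (by norm_num)
      linarith
  have hsub : Metric.closedBall a r ∪ Metric.closedBall b r ⊆ Ar :=
    Set.union_subset (ball_subset_Ar hAr h.1) (ball_subset_Ar hAr h.2.1)
  exact hU.subset_connectedComponentIn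
    (Set.mem_union_left _ (Metric.mem_closedBall_self hr))
    hsub (Set.mem_union_right _ (Metric.mem_closedBall_self hr))

include hr hAr in
lemma chain_mem_component {a b : Pt} (ha : a ∈ A) (h : Chain A r a b) :
    b ∈ connectedComponentIn Ar a := by
  induction h with
  | refl => exact mem_connectedComponentIn (mem_Ar hr hAr ha)
  | @tail c b hac hstep ih =>
    have h1 : b ∈ connectedComponentIn Ar c := step_mem_component hr hAr hstep
    rw [connectedComponentIn_eq ih]
    exact h1

/-- A preconnected set inside a disjoint union of two closed sets, meeting the first,
lies in the first. -/
lemma preconnected_subset_left {s U V : Set Pt} (hs : IsPreconnected s)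
    (hU : IsClosed U) (hV : IsClosed V) (hd : Disjoint U V)
    (hsub : s ⊆ U ∪ V) (hne : (s ∩ U).Nonempty) : s ⊆ U := by
  by_contra hcon
  obtain ⟨y, hys, hyU⟩ := not_subset.mp hcon
  have hyV : y ∈ V := (hsub hys).resolve_left hyU
  obtain ⟨z, hz⟩ := isPreconnected_closed_iff.mp hs U V hU hV hsub hne ⟨y, hys, hyV⟩
  exact hd.ne_of_mem hz.2.1 hz.2.2 rfl

include hr hAr in
lemma component_subset_chain {a : Pt} (ha : a ∈ A) :
    connectedComponentIn Ar a ⊆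
      ⋃ c ∈ {c : Pt | c ∈ A ∧ Chain A r a c}, Metric.closedBall c r := by
  set U := ⋃ c ∈ {c : Pt | c ∈ A ∧ Chain A r a c}, Metric.closedBall c r with hU
  set V := ⋃ c ∈ {c : Pt | c ∈ A ∧ ¬ Chain A r a c}, Metric.closedBall c r with hV
  have hfinU : ({c : Pt | c ∈ A ∧ Chain A r a c}).Finite :=
    A.finite_toSet.subset fun c hc => hc.1
  have hfinV : ({c : Pt | c ∈ A ∧ ¬ Chain A r a c}).Finite :=
    A.finite_toSet.subset fun c hc => hc.1
  have hUc : IsClosed U := hfinU.isClosed_biUnion fun c _ => Metric.isClosed_closedBall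
  have hVc : IsClosed V := hfinV.isClosed_biUnion fun c _ => Metric.isClosed_closedBall
  have hdisj : Disjoint U V := by
    rw [Set.disjoint_left]
    rintro x hxU hxV
    simp only [hU, hV, Set.mem_iUnion, Set.mem_setOf_eq] at hxU hxV
    obtain ⟨c, ⟨hcA, hcchain⟩, hxc⟩ := hxU
    obtain ⟨d, ⟨hdA, hdnchain⟩, hxd⟩ := hxV
    apply hdnchain
    refine hcchain.tail ⟨hcA, hdA, ?_⟩
    calc dist c d ≤ dist c x + dist x d := dist_triangle c x d
    _ ≤ r + r := by
        rw [Metric.mem_closedBall] at hxc hxd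
        rw [dist_comm] at hxc
        exact add_le_add hxc hxd
    _ = 2 * r := by ring
  have hsub : connectedComponentIn Ar a ⊆ U ∪ V := by
    refine (connectedComponentIn_subset Ar a).trans ?_
    rw [hAr]
    intro x hx
    simp only [Set.mem_iUnion] at hx
    obtain ⟨c, hcA, hxc⟩ := hx
    by_cases hc : Chain A r a c
    · exact Or.inl (Set.mem_biUnion ⟨hcA, hc⟩ hxc)
    · exact Or.inr (Set.mem_biUnion ⟨hcA, hc⟩ hxc)
  have hne : (connectedComponentIn Ar a ∩ U).Nonempty := by
    refine ⟨a, mem_connectedComponentIn (mem_Ar hr hAr ha), ?_⟩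
    exact Set.mem_biUnion ⟨ha, Relation.ReflTransGen.refl⟩ (Metric.mem_closedBall_self hr)
  exact preconnected_subset_left isPreconnected_connectedComponentIn hUc hVc hdisj hsub hne

include hr hAr in
lemma chain_of_mem_component {a b : Pt} (ha : a ∈ A) (hb : b ∈ A)
    (h : b ∈ connectedComponentIn Ar a) : Chain A r a b := by
  have := component_subset_chain hr hAr ha h
  simp only [Set.mem_iUnion, Set.mem_setOf_eq] at this
  obtain ⟨c, ⟨hcA, hcchain⟩, hbc⟩ := this
  refine hcchain.tail ⟨hcA, hb, ?_⟩
  rw [Metric.mem_closedBall, dist_comm] at hbc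
  linarith

include hr hAr in
lemma mem_component_iff_chain {a b : Pt} (ha : a ∈ A) (hb : b ∈ A) :
    b ∈ connectedComponentIn Ar a ↔ Chain A r a b :=
  ⟨chain_of_mem_component hr hAr ha hb, chain_mem_component hr hAr ha⟩

include hAr in
set_option linter.unusedSectionVars false in
lemma mem_component_iff_subtype {a b : Pt} (ha : a ∈ Ar) (hb : b ∈ Ar) :
    b ∈ connectedComponentIn Ar a ↔
      (⟨b, hb⟩ : Ar) ∈ connectedComponent (⟨a, ha⟩ : Ar) := by
  rw [connectedComponentIn_eq_image ha]
  constructor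
  · rintro ⟨z, hz, hzb⟩
    have : z = ⟨b, hb⟩ := Subtype.ext hzb
    rwa [← this]
  · intro h
    exact ⟨⟨b, hb⟩, h, rfl⟩

end UnionDisksAux

open UnionDisksAux in
/-- Let `A_r` be the union of closed disks of radius `r ≥ 0`
around the points of a finite set `A ⊆ ℝ²`.  Two points `a, b ∈ A` lie in the same
connected component of `A_r` iff they are joined by a chain of points of `A` with
consecutive distances at most `2r`; consequently the number of connected components
of `A_r` equals the number of connected components of the graph on `A` whose edges
are the pairs at distance at most `2r`. -/
theorem union_of_disks_components (A : Finset Pt) (r : ℝ) (hr : 0 ≤ r) :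
    ∀ Ar : Set Pt, Ar = (⋃ a ∈ A, Metric.closedBall a r) →
      (∀ a ∈ A, ∀ b ∈ A,
        ((b : Pt) ∈ connectedComponentIn Ar a ↔
          ∃ (k : ℕ) (x : Fin (k + 1) → Pt), (∀ i, x i ∈ A) ∧
            x 0 = a ∧ x (Fin.last k) = b ∧
            ∀ i : Fin k, dist (x i.castSucc) (x i.succ) ≤ 2 * r)) ∧
      Nat.card (ConnectedComponents Ar) =
        Nat.card (SimpleGraph.fromRel
          (fun a b : A => dist (a : Pt) (b : Pt) ≤ 2 * r)).ConnectedComponent := by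
  intro Ar hAr
  set G := SimpleGraph.fromRel (fun a b : A => dist (a : Pt) (b : Pt) ≤ 2 * r) with hG
  -- chain relation vs graph reachability
  have reach_of_chain : ∀ {x y : Pt} (hx : x ∈ A) (hy : y ∈ A),
      Chain A r x y → G.Reachable ⟨x, hx⟩ ⟨y, hy⟩ := by
    intro x y hx hy h
    induction h with
    | refl => rfl
    | @tail c y hac hstep ih =>
      refine (ih hstep.1).trans ?_
      by_cases hEq : (⟨c, hstep.1⟩ : A) = ⟨y, hy⟩
      · rw [hEq]
      · exact (SimpleGraph.fromRel_adj _ _ _ |>.mpr ⟨hEq, Or.inl hstep.2.2⟩).reachable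
  have chain_of_reach : ∀ (x y : A), G.Reachable x y → Chain A r ↑x ↑y := by
    intro x y h
    obtain ⟨p⟩ := h
    induction p with
    | nil => exact Relation.ReflTransGen.refl
    | @cons u v w hadj p ih =>
      have hd : dist (u : Pt) (v : Pt) ≤ 2 * r := by
        rcases (SimpleGraph.fromRel_adj _ _ _ |>.mp hadj).2 with h1 | h1
        · exact h1
        · rwa [dist_comm]
      exact Relation.ReflTransGen.head ⟨u.2, v.2, hd⟩ ih
  constructor
  · intro a ha b hb
    rw [mem_component_iff_chain hr hAr ha hb]
    constructor
    · intro h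
      exact fin_of_chain ha h
    · rintro ⟨k, x, hmem, h0, hlast, hd⟩
      have := chain_of_fin x hmem hd
      rwa [h0, hlast] at this
  · -- cardinality statement
    have key : ∀ v w : A, G.Reachable v w →
        (ConnectedComponents.mk ⟨(v : Pt), mem_Ar hr hAr v.2⟩ : ConnectedComponents Ar)
          = ConnectedComponents.mk ⟨(w : Pt), mem_Ar hr hAr w.2⟩ := by
      intro v w hvw
      have hchain : Chain A r ↑v ↑w := chain_of_reach v w hvw
      have hmem : (w : Pt) ∈ connectedComponentIn Ar ↑v :=
        chain_mem_component hr hAr v.2 hchain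
      have := (mem_component_iff_subtype hAr (mem_Ar hr hAr v.2) (mem_Ar hr hAr w.2)).mp hmem
      exact (ConnectedComponents.coe_eq_coe'.mpr this).symm
    let g : G.ConnectedComponent → ConnectedComponents Ar :=
      Quot.lift (fun a : A => ConnectedComponents.mk ⟨(a : Pt), mem_Ar hr hAr a.2⟩)
        (fun v w hvw => key v w hvw)
    have hg : Function.Bijective g := by
      constructor
      · intro c d
        refine SimpleGraph.ConnectedComponent.ind₂ (fun v w h => ?_) c d
        have : ConnectedComponents.mk (⟨(v : Pt), mem_Ar hr hAr v.2⟩ : Ar)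
            = ConnectedComponents.mk (⟨(w : Pt), mem_Ar hr hAr w.2⟩ : Ar) := h
        rw [ConnectedComponents.coe_eq_coe'] at this
        have hmem : (v : Pt) ∈ connectedComponentIn Ar ↑w :=
          (mem_component_iff_subtype hAr (mem_Ar hr hAr w.2) (mem_Ar hr hAr v.2)).mpr this
        have hchain : Chain A r ↑w ↑v := chain_of_mem_component hr hAr w.2 v.2 hmem
        exact SimpleGraph.ConnectedComponent.sound (reach_of_chain w.2 v.2 hchain).symm
      · intro y
        obtain ⟨z, rfl⟩ := ConnectedComponents.surjective_coe y
        obtain ⟨p, hp⟩ := z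
        have hp' : p ∈ ⋃ a ∈ A, Metric.closedBall a r := hAr ▸ hp
        simp only [Set.mem_iUnion] at hp'
        obtain ⟨c, hcA, hpc⟩ := hp'
        refine ⟨G.connectedComponentMk ⟨c, hcA⟩, ?_⟩
        have hmem : p ∈ connectedComponentIn Ar c :=
          (convex_closedBall c r).isPreconnected.subset_connectedComponentIn
            (Metric.mem_closedBall_self hr) (ball_subset_Ar hAr hcA) hpc
        have := (mem_component_iff_subtype hAr (mem_Ar hr hAr hcA) hp).mp hmem
        exact (ConnectedComponents.coe_eq_coe'.mpr this).symm
    exact (Nat.card_congr (Equiv.ofBijective g hg)).symm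
end
end
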